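/- arXiv:2404.00410 — 7 statements merged into one kernel-verified Lean document; each statement's English description precedes it below -/
import Mathlib

section
/- Let p_l = (m₁, …, m_l) be any finite sequence of integers of length l, let t₁, t₂ be nonnegative integers, and let p be the concatenation of p_l with the number 2 repeated t₂ times followed by the number 1 repeated t₁ times. Then λ(p) = λ(p_l) − f(t₁, t₂, l), where f(t₁, t₂, l) = (t₂ − 1)² + (1/2)(t₁ − 1/2)² + t₁t₂ + l(2t₂ + t₁) − 9/8. Equivalently, λ(p) = λ(p_l) + 3t₂ + t₁ − (2l + t₂ + 1)t₂ − (2l + 2t₂ + t₁ + 1)t₁/2. -/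
/-- `λ(p) = (1/2)·Σ_{j=1}^k n_j·(n_j − 2j + 1)` for a finite sequence of integers. -/
def transLamZ (L : List ℤ) : ℚ :=
  (∑ j ∈ Finset.range L.length,
    (L.getD j 0 : ℚ) * ((L.getD j 0 : ℚ) - 2 * ((j : ℚ) + 1) + 1)) / 2

lemma transLamZ_append_singleton (L : List ℤ) (a : ℤ) :
    transLamZ (L ++ [a]) =
      transLamZ L + (a : ℚ) * ((a : ℚ) - 2 * ((L.length : ℚ) + 1) + 1) / 2 := by
  unfold transLamZ
  rw [List.length_append, List.length_singleton, Finset.sum_range_succ]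
  have h1 : ∀ j ∈ Finset.range L.length,
      ((L ++ [a]).getD j 0 : ℚ) * (((L ++ [a]).getD j 0 : ℚ) - 2 * ((j : ℚ) + 1) + 1)
        = (L.getD j 0 : ℚ) * ((L.getD j 0 : ℚ) - 2 * ((j : ℚ) + 1) + 1) := by
    intro j hj
    rw [Finset.mem_range] at hj
    rw [List.getD_append _ _ _ _ hj]
  rw [Finset.sum_congr rfl h1]
  have h2 : (L ++ [a]).getD L.length 0 = a := by
    rw [List.getD_append_right _ _ _ _ le_rfl]
    simp
  rw [h2]
  ring

lemma transLamZ_append_replicate (L : List ℤ) (t : ℕ) (c : ℤ) :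
    transLamZ (L ++ List.replicate t c) =
      transLamZ L + (t : ℚ) * (c : ℚ) * ((c : ℚ) - 2 * (L.length : ℚ) - (t : ℚ)) / 2 := by
  induction t with
  | zero => simp
  | succ n ih =>
    have : L ++ List.replicate (n + 1) c = (L ++ List.replicate n c) ++ [c] := by
      rw [List.append_assoc]
      congr 1
      rw [List.replicate_succ']
    rw [this, transLamZ_append_singleton, ih, List.length_append, List.length_replicate]
    push_cast
    ring

theorem lam_append_twos_ones (pl : List ℤ) (t₁ t₂ : ℕ) :
    transLamZ (pl ++ List.replicate t₂ 2 ++ List.replicate t₁ 1) =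
      transLamZ pl -
        (((t₂ : ℚ) - 1) ^ 2 + (1 / 2) * ((t₁ : ℚ) - 1 / 2) ^ 2 + (t₁ : ℚ) * (t₂ : ℚ)
          + (pl.length : ℚ) * (2 * (t₂ : ℚ) + (t₁ : ℚ)) - 9 / 8) := by
  rw [transLamZ_append_replicate, transLamZ_append_replicate,
    List.length_append, List.length_replicate]
  push_cast
  ring
end

section
/- For every integer n ≥ 19 and every integer m with 0 ≤ m ≤ (n−1)/2 if n is odd, respectively 0 ≤ m ≤ (n−4)/2 if n is even, there exists a partition p of n such that λ(p) = m. -/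
/-- `λ(p) = (1/2)·Σ_{j=1}^k n_j·(n_j − 2j + 1)` for a finite sequence of naturals. -/
def transLam (L : List ℕ) : ℚ :=
  (∑ j ∈ Finset.range L.length,
    (L.getD j 0 : ℚ) * ((L.getD j 0 : ℚ) - 2 * ((j : ℚ) + 1) + 1)) / 2

/-- A partition of `n`: a nonincreasing list of positive integers summing to `n`. -/
def IsPartitionOf (n : ℕ) (L : List ℕ) : Prop :=
  L.Pairwise (· ≥ ·) ∧ (∀ x ∈ L, 0 < x) ∧ L.sum = n

lemma transLam_concat (A : List ℕ) (c : ℕ) :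
    transLam (A ++ [c]) = transLam A + (c : ℚ) * ((c:ℚ) - 2*(A.length:ℚ) - 1) / 2 := by
  unfold transLam
  rw [List.length_append, List.length_singleton, Finset.sum_range_succ]
  rw [Finset.sum_congr rfl (fun j hj => by
    rw [List.getD_append _ _ _ _ (Finset.mem_range.mp hj)])]
  rw [List.getD_append_right _ _ _ _ (le_refl _), Nat.sub_self]
  show (_ + (c:ℚ) * ((c:ℚ) - 2*((A.length:ℚ)+1)+1))/2 = _
  ring

lemma transLam_rep (A : List ℕ) (c k : ℕ) :
    transLam (A ++ List.replicate k c)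
      = transLam A + (c:ℚ) * (k:ℚ) * ((c:ℚ) - 2*(A.length:ℚ) - (k:ℚ)) / 2 := by
  induction k with
  | zero => simp
  | succ k ih =>
    rw [List.replicate_succ', ← List.append_assoc, transLam_concat, ih,
      List.length_append, List.length_replicate]
    push_cast; ring

lemma transLam_one (p : ℕ) : transLam [p] = (p:ℚ)*((p:ℚ)-1)/2 := by
  simp [transLam, Finset.sum_range_succ, -mul_eq_mul_left_iff]; ring

lemma transLam_two (p q : ℕ) :
    transLam [p, q] = ((p:ℚ)*((p:ℚ)-1) + (q:ℚ)*((q:ℚ)-3))/2 := by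
  simp [transLam, Finset.sum_range_succ]; ring

lemma transLam_three (p q r : ℕ) :
    transLam [p, q, r] = ((p:ℚ)*((p:ℚ)-1) + (q:ℚ)*((q:ℚ)-3) + (r:ℚ)*((r:ℚ)-5))/2 := by
  simp [transLam, Finset.sum_range_succ]; ring

lemma sorted_rep_append (x b : ℕ) (L : List ℕ) (hL : L.Pairwise (· ≥ ·))
    (hb : ∀ c ∈ L, c ≤ b) : (List.replicate x b ++ L).Pairwise (· ≥ ·) := by
  induction x with
  | zero => simpa
  | succ x ih =>
    rw [List.replicate_succ, List.cons_append]
    refine List.pairwise_cons.mpr ⟨?_, ih⟩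
    intro c hc
    simp only [List.mem_append, List.mem_replicate] at hc
    rcases hc with h | h
    · omega
    · exact hb c h

lemma sorted_replicate (k c : ℕ) : (List.replicate k c).Pairwise (· ≥ ·) := by
  induction k with
  | zero => simp
  | succ k ih =>
    rw [List.replicate_succ]
    refine List.pairwise_cons.mpr ⟨?_, ih⟩
    intro b hb
    simp only [List.mem_replicate] at hb
    omega

lemma sorted_rep_rep (y z b c : ℕ) (h : c ≤ b) :
    (List.replicate y b ++ List.replicate z c).Pairwise (· ≥ ·) := by
  refine sorted_rep_append y b _ (sorted_replicate z c) ?_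
  intro d hd
  simp only [List.mem_replicate] at hd
  omega

lemma partM0 (p z : ℕ) (hp : 1 ≤ p) :
    IsPartitionOf (p + z) ([p] ++ List.replicate z 1) ∧
    transLam ([p] ++ List.replicate z 1)
      = (p:ℚ)*((p:ℚ)-1)/2 - (z:ℚ)*((z:ℚ)+1)/2 := by
  constructor
  · refine ⟨?_, ?_, ?_⟩
    · simp only [List.cons_append, List.nil_append]
      refine List.pairwise_cons.mpr ⟨?_, sorted_replicate z 1⟩
      intro x hx
      simp only [List.mem_replicate] at hx
      omega
    · intro x hx
      simp only [List.cons_append, List.nil_append, List.mem_cons, List.mem_replicate] at hx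
      omega
    · simp only [List.sum_append, List.sum_replicate, smul_eq_mul, List.sum_cons, List.sum_nil]
      omega
  · rw [transLam_rep, transLam_one, List.length_singleton]
    push_cast; ring

lemma partM1 (p q y z : ℕ) (hq : 2 ≤ q) (hpq : q ≤ p) :
    IsPartitionOf (p + q + 2*y + z) (([p, q] ++ List.replicate y 2) ++ List.replicate z 1) ∧
    transLam (([p, q] ++ List.replicate y 2) ++ List.replicate z 1)
      = ((p:ℚ)*((p:ℚ)-1) + (q:ℚ)*((q:ℚ)-3))/2 - (y:ℚ)*((y:ℚ)+2)
        - (z:ℚ)*((z:ℚ)+2*(y:ℚ)+3)/2 := by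
  constructor
  · refine ⟨?_, ?_, ?_⟩
    · have hs := sorted_rep_rep y z 2 1 (by norm_num)
      simp only [List.append_assoc, List.cons_append, List.nil_append]
      refine List.pairwise_cons.mpr ⟨?_, List.pairwise_cons.mpr ⟨?_, hs⟩⟩
      · intro x hx
        simp only [List.mem_cons, List.mem_append, List.mem_replicate] at hx
        omega
      · intro x hx
        simp only [List.mem_append, List.mem_replicate] at hx
        omega
    · intro x hx
      simp only [List.append_assoc, List.cons_append, List.nil_append, List.mem_cons,
        List.mem_append, List.mem_replicate] at hx
      omega
    · simp only [List.sum_append, List.sum_replicate, smul_eq_mul, List.sum_cons, List.sum_nil]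
      omega
  · rw [transLam_rep, transLam_rep, transLam_two, List.length_append, List.length_replicate]
    simp only [List.length_cons, List.length_nil]
    push_cast; ring

lemma partM3 (p q r x y z : ℕ) (hr : 3 ≤ r) (hqr : r ≤ q) (hpq : q ≤ p) :
    IsPartitionOf (p + q + r + 3*x + 2*y + z)
      ((([p, q, r] ++ List.replicate x 3) ++ List.replicate y 2) ++ List.replicate z 1) ∧
    transLam ((([p, q, r] ++ List.replicate x 3) ++ List.replicate y 2) ++ List.replicate z 1)
      = ((p:ℚ)*((p:ℚ)-1) + (q:ℚ)*((q:ℚ)-3) + (r:ℚ)*((r:ℚ)-5))/2 - 3*(x:ℚ)*((x:ℚ)+3)/2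
        - (y:ℚ)*((y:ℚ)+2*(x:ℚ)+4) - (z:ℚ)*((z:ℚ)+2*(x:ℚ)+2*(y:ℚ)+5)/2 := by
  constructor
  · refine ⟨?_, ?_, ?_⟩
    · have hs1 := sorted_rep_rep y z 2 1 (by norm_num)
      have hs : (List.replicate x 3 ++ (List.replicate y 2 ++ List.replicate z 1)).Pairwise
          (· ≥ ·) := by
        refine sorted_rep_append x 3 _ hs1 ?_
        intro c hc
        simp only [List.mem_append, List.mem_replicate] at hc
        omega
      simp only [List.append_assoc, List.cons_append, List.nil_append]
      refine List.pairwise_cons.mpr ⟨?_, List.pairwise_cons.mpr ⟨?_,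
        List.pairwise_cons.mpr ⟨?_, hs⟩⟩⟩
      · intro a ha
        simp only [List.mem_cons, List.mem_append, List.mem_replicate] at ha
        omega
      · intro a ha
        simp only [List.mem_cons, List.mem_append, List.mem_replicate] at ha
        omega
      · intro a ha
        simp only [List.mem_append, List.mem_replicate] at ha
        omega
    · intro a ha
      simp only [List.append_assoc, List.cons_append, List.nil_append, List.mem_cons,
        List.mem_append, List.mem_replicate] at ha
      omega
    · simp only [List.sum_append, List.sum_replicate, smul_eq_mul, List.sum_cons, List.sum_nil]
      omega
  · rw [transLam_rep, transLam_rep, transLam_rep, transLam_three]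
    simp only [List.length_append, List.length_replicate, List.length_cons, List.length_nil]
    push_cast; ring

lemma useM0 (n m p z : ℕ) (hp : 1 ≤ p) (hn : n = p + z)
    (hm : (p:ℚ)*((p:ℚ)-1)/2 - (z:ℚ)*((z:ℚ)+1)/2 = (m:ℚ)) :
    ∃ L, IsPartitionOf n L ∧ transLam L = (m:ℚ) := by
  obtain ⟨h1, h2⟩ := partM0 p z hp
  subst hn
  exact ⟨_, h1, by rw [h2, hm]⟩

lemma useM1 (n m p q y z : ℕ) (hq : 2 ≤ q) (hpq : q ≤ p) (hn : n = p + q + 2*y + z)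
    (hm : ((p:ℚ)*((p:ℚ)-1) + (q:ℚ)*((q:ℚ)-3))/2 - (y:ℚ)*((y:ℚ)+2)
        - (z:ℚ)*((z:ℚ)+2*(y:ℚ)+3)/2 = (m:ℚ)) :
    ∃ L, IsPartitionOf n L ∧ transLam L = (m:ℚ) := by
  obtain ⟨h1, h2⟩ := partM1 p q y z hq hpq
  subst hn
  exact ⟨_, h1, by rw [h2, hm]⟩

lemma useM3 (n m p q r x y z : ℕ) (hr : 3 ≤ r) (hqr : r ≤ q) (hpq : q ≤ p)
    (hn : n = p + q + r + 3*x + 2*y + z)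
    (hm : ((p:ℚ)*((p:ℚ)-1) + (q:ℚ)*((q:ℚ)-3) + (r:ℚ)*((r:ℚ)-5))/2 - 3*(x:ℚ)*((x:ℚ)+3)/2
        - (y:ℚ)*((y:ℚ)+2*(x:ℚ)+4) - (z:ℚ)*((z:ℚ)+2*(x:ℚ)+2*(y:ℚ)+5)/2 = (m:ℚ)) :
    ∃ L, IsPartitionOf n L ∧ transLam L = (m:ℚ) := by
  obtain ⟨h1, h2⟩ := partM3 p q r x y z hr hqr hpq
  subst hn
  exact ⟨_, h1, by rw [h2, hm]⟩

theorem segment_S1_in_spectrum (n : ℕ) (hn : 19 ≤ n) (m : ℕ)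
    (hodd : Odd n → 2 * m ≤ n - 1) (heven : Even n → 2 * m ≤ n - 4) :
    ∃ L : List ℕ, IsPartitionOf n L ∧ transLam L = (m : ℚ) := by
  rcases Nat.even_or_odd n with he | ho
  · -- n even
    obtain ⟨r, hr⟩ := he
    have hb : 2 * m ≤ n - 4 := heven ⟨r, hr⟩
    rcases Nat.even_or_odd m with hme | hmo
    · obtain ⟨v, hv⟩ := hme
      by_cases hm0 : m = 0
      · subst hm0
        refine useM1 n 0 ((n-4)/2+2) 2 0 ((n-4)/2) (by omega) (by omega) (by omega) ?_
        obtain ⟨e, he1⟩ : ∃ e, (n-4)/2 = e := ⟨_, rfl⟩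
        rw [he1]; push_cast; ring
      · by_cases h4 : n % 4 = 0
        · -- E4
          obtain ⟨e, d, hm, hn'⟩ : ∃ e d, m = 2*e+2 ∧
              n = (2*e+d+4) + (d+2) + 2*(d+1) + 2*e :=
            ⟨m/2-1, (n-2*m-4)/4, by omega, by omega⟩
          refine useM1 n m (2*e+d+4) (d+2) (d+1) (2*e) (by omega) (by omega) hn' ?_
          subst hm; push_cast; ring
        · by_cases h8 : m % 4 = 0 ∧ 8 ≤ m
          · -- E5
            obtain ⟨h81, h82⟩ := h8
            obtain ⟨j, g, hm, hn'⟩ : ∃ j g, m = 4*j+8 ∧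
                n = (3*j+g+9) + (j+g+4) + 2*(j+g+4) + (2*j+1) :=
              ⟨(m-8)/4, (n-2*m-6)/4, by omega, by omega⟩
            refine useM1 n m (3*j+g+9) (j+g+4) (j+g+4) (2*j+1) (by omega) (by omega) hn' ?_
            subst hm; push_cast; ring
          · by_cases h10 : m % 4 = 2 ∧ 10 ≤ m
            · -- E6
              obtain ⟨h101, h102⟩ := h10
              obtain ⟨j, g, hm, hn'⟩ : ∃ j g, m = 4*j+10 ∧
                  n = (3*j+2*g+11) + (j+6) + 2*j + (2*j+2*g+9) :=
                ⟨(m-10)/4, (n-2*m-6)/4, by omega, by omega⟩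
              refine useM1 n m (3*j+2*g+11) (j+6) j (2*j+2*g+9) (by omega) (by omega) hn' ?_
              subst hm; push_cast; ring
            · -- m ∈ {2, 4, 6}, n % 4 = 2
              have hm246 : m = 2 ∨ m = 4 ∨ m = 6 := by omega
              rcases hm246 with hm | hm | hm
              · -- E7a
                subst hm
                obtain ⟨e, hn'⟩ : ∃ e, n = (e+6) + 5 + 5 + 3*1 + 2*1 + (e+1) :=
                  ⟨(n-22)/2, by omega⟩
                refine useM3 n 2 (e+6) 5 5 1 1 (e+1) (by omega) (by omega) (by omega) hn' ?_
                push_cast; ring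
              · subst hm
                by_cases h32 : 32 ≤ n
                · -- E7b
                  obtain ⟨e, hn'⟩ : ∃ e, n = (e+7) + 7 + 7 + 3*3 + 2*1 + e :=
                    ⟨(n-32)/2, by omega⟩
                  refine useM3 n 4 (e+7) 7 7 3 1 e (by omega) (by omega) (by omega) hn' ?_
                  push_cast; ring
                · have : n = 22 ∨ n = 26 ∨ n = 30 := by omega
                  rcases this with h | h | h <;> subst h
                  · exact useM3 22 4 6 6 4 1 1 1 (by norm_num) (by norm_num) (by norm_num)
                      (by norm_num) (by norm_num)
                  · exact useM3 26 4 7 6 5 2 0 2 (by norm_num) (by norm_num) (by norm_num)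
                      (by norm_num) (by norm_num)
                  · exact useM3 30 4 9 6 5 2 0 4 (by norm_num) (by norm_num) (by norm_num)
                      (by norm_num) (by norm_num)
              · subst hm
                by_cases h44 : 44 ≤ n
                · -- E7c
                  obtain ⟨e, hn'⟩ : ∃ e, n = (e+9) + 9 + 9 + 3*5 + 2*1 + e :=
                    ⟨(n-44)/2, by omega⟩
                  refine useM3 n 6 (e+9) 9 9 5 1 e (by omega) (by omega) (by omega) hn' ?_
                  push_cast; ring
                · have : n = 22 ∨ n = 26 ∨ n = 30 ∨ n = 34 ∨ n = 38 ∨ n = 42 := by omega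
                  rcases this with h | h | h | h | h | h <;> subst h
                  · exact useM3 22 6 7 5 4 1 1 1 (by norm_num) (by norm_num) (by norm_num)
                      (by norm_num) (by norm_num)
                  · exact useM3 26 6 7 6 5 2 1 0 (by norm_num) (by norm_num) (by norm_num)
                      (by norm_num) (by norm_num)
                  · exact useM1 30 6 10 9 1 9 (by norm_num) (by norm_num) (by norm_num)
                      (by norm_num)
                  · exact useM1 34 6 15 2 6 5 (by norm_num) (by norm_num) (by norm_num)
                      (by norm_num)
                  · exact useM1 38 6 13 10 2 11 (by norm_num) (by norm_num) (by norm_num)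
                      (by norm_num)
                  · exact useM1 42 6 17 4 10 1 (by norm_num) (by norm_num) (by norm_num)
                      (by norm_num)
    · -- m odd, n even
      obtain ⟨v, hv⟩ := hmo
      by_cases hm1 : m = 1
      · -- E2
        subst hm1
        obtain ⟨e, hn'⟩ : ∃ e, n = (e+4) + 4 + 4 + 3*0 + 2*1 + e := ⟨(n-14)/2, by omega⟩
        refine useM3 n 1 (e+4) 4 4 0 1 e (by omega) (by omega) (by omega) hn' ?_
        push_cast; ring
      · -- E3
        obtain ⟨t, e, hm, hn'⟩ : ∃ t e, m = 2*t+3 ∧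
            n = (t+e+4) + (t+4) + 2*t + (e+2) :=
          ⟨(m-3)/2, (n-2*m-4)/2, by omega, by omega⟩
        refine useM1 n m (t+e+4) (t+4) t (e+2) (by omega) (by omega) hn' ?_
        subst hm; push_cast; ring
  · -- n odd
    obtain ⟨r, hr⟩ := ho
    have hb : 2 * m ≤ n - 1 := hodd ⟨r, hr⟩
    by_cases hm0 : m = 0
    · subst hm0
      refine useM0 n 0 (r+1) r (by omega) (by omega) ?_
      push_cast; ring
    · by_cases hsmall : 4*m + 3 ≤ n
      · -- O2
        obtain ⟨y, z, hm, hn'⟩ : ∃ y z, m = y+1 ∧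
            n = (y+z+3) + (y+3) + 2*y + (z+1) :=
          ⟨m-1, (n-4*m-3)/2, by omega, by omega⟩
        refine useM1 n m (y+z+3) (y+3) y (z+1) (by omega) (by omega) hn' ?_
        subst hm; push_cast; ring
      · rcases Nat.even_or_odd m with hme | hmo
        · obtain ⟨v, hv⟩ := hme
          by_cases h8 : 8 ≤ m
          · -- O5
            obtain ⟨s, e, hm, hn'⟩ : ∃ s e, m = 2*s+8 ∧
                n = (s+e+5) + (s+5) + 5 + 3*0 + 2*s + (e+2) :=
              ⟨(m-8)/2, (n-2*m-1)/2, by omega, by omega⟩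
            refine useM3 n m (s+e+5) (s+5) 5 0 s (e+2) (by omega) (by omega) (by omega) hn' ?_
            subst hm; push_cast; ring
          · -- m = 6, n ∈ {19,21,23,25}
            have hm6 : m = 6 := by omega
            by_cases h21 : n ≤ 21
            · -- O4 style
              obtain ⟨c, d, hm', hn'⟩ : ∃ c d, m = c+d+2 ∧
                  n = (c+d+3) + (c+2) + 2*c + d :=
                ⟨(n-2*m-1)/2, (4*m-n-3)/2, by omega, by omega⟩
              refine useM1 n m (c+d+3) (c+2) c d (by omega) (by omega) hn' ?_
              subst hm'; push_cast; ring
            · subst hm6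
              have : n = 23 ∨ n = 25 := by omega
              rcases this with h | h <;> subst h
              · exact useM1 23 6 8 7 1 6 (by norm_num) (by norm_num) (by norm_num) (by norm_num)
              · exact useM1 25 6 11 2 6 0 (by norm_num) (by norm_num) (by norm_num) (by norm_num)
        · -- m odd
          obtain ⟨v, hv⟩ := hmo
          by_cases hbig : 2*m + 5 ≤ n
          · -- O3
            obtain ⟨s, z0, hm, hn'⟩ : ∃ s z0, m = 2*s+5 ∧
                n = (s+z0+5) + (s+5) + 3 + 3*0 + 2*s + (z0+2) :=
              ⟨(m-5)/2, (n-2*m-5)/2, by omega, by omega⟩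
            refine useM3 n m (s+z0+5) (s+5) 3 0 s (z0+2) (by omega) (by omega) (by omega) hn' ?_
            subst hm; push_cast; ring
          · -- O4
            obtain ⟨c, d, hm, hn'⟩ : ∃ c d, m = c+d+2 ∧
                n = (c+d+3) + (c+2) + 2*c + d :=
              ⟨(n-2*m-1)/2, (4*m-n-3)/2, by omega, by omega⟩
            refine useM1 n m (c+d+3) (c+2) c d (by omega) (by omega) hn' ?_
            subst hm; push_cast; ring
end

section
/- For every integer n ≥ 19 and every integer m with 0 ≤ m ≤ (n−1)/2 if n is odd, respectively 0 ≤ m ≤ (n−4)/2 if n is even, there exists a partition p of n such that λ(p) = m, the largest part of p is at most (n + 1)/2, and the number of parts of p is at most (n + 1)/2. -/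
lemma transLam_nil : transLam [] = 0 := by simp [transLam]

lemma transLam_append_singleton (X : List ℕ) (y : ℕ) :
    transLam (X ++ [y]) = transLam X +
      (y : ℚ) * ((y : ℚ) - 2 * X.length - 1) / 2 := by
  unfold transLam
  rw [List.length_append]
  simp only [List.length_singleton]
  rw [Finset.sum_range_succ]
  have h1 : ∀ j ∈ Finset.range X.length,
      ((X ++ [y]).getD j 0 : ℚ) * (((X ++ [y]).getD j 0 : ℚ) - 2 * ((j : ℚ) + 1) + 1)
      = (X.getD j 0 : ℚ) * ((X.getD j 0 : ℚ) - 2 * ((j : ℚ) + 1) + 1) := by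
    intro j hj
    rw [List.getD_append _ _ _ _ (Finset.mem_range.mp hj)]
  rw [Finset.sum_congr rfl h1]
  have h2 : (X ++ [y]).getD X.length 0 = y := by
    rw [List.getD_append_right _ _ _ _ (le_refl _)]
    simp
  rw [h2]
  push_cast
  ring

lemma transLam_append_replicate (X : List ℕ) (k r : ℕ) :
    transLam (X ++ List.replicate k r) = transLam X +
      (r : ℚ) * (k : ℚ) * ((r : ℚ) - 2 * X.length - k) / 2 := by
  induction k with
  | zero => simp
  | succ k ih =>
    rw [List.replicate_succ', ← List.append_assoc, transLam_append_singleton, ih]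
    rw [List.length_append, List.length_replicate]
    push_cast
    ring

lemma sorted_ge_append_replicate {X : List ℕ} {r : ℕ} (k : ℕ)
    (hX : List.Pairwise (· ≥ ·) X) (h : ∀ x ∈ X, r ≤ x) :
    List.Pairwise (· ≥ ·) (X ++ List.replicate k r) := by
  rw [List.pairwise_append]
  refine ⟨hX, ?_, ?_⟩
  · exact List.pairwise_replicate.mpr (Or.inr (le_refl r))
  · intro a ha b hb
    rw [List.eq_of_mem_replicate hb]
    exact h a ha

lemma fam1 (N n m : ℕ) (hn : n = 2*N+1) (hm : m = 0) :
    ∃ L : List ℕ, IsPartitionOf n L ∧ transLam L = (m : ℚ) ∧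
      (∀ x ∈ L, 2 * x ≤ n + 1) ∧ 2 * L.length ≤ n + 1 := by
  subst hn; subst hm
  refine ⟨([N+1] ++ List.replicate (N) 1), ⟨?_, ?_, ?_⟩, ?_, ?_, ?_⟩
  · refine sorted_ge_append_replicate _ ?_ ?_
    · simp [List.pairwise_cons]; try omega
    · intro x hx; simp at hx; omega
  · intro x hx; simp at hx; omega
  · simp [List.sum_append, List.sum_replicate]; omega
  · rw [show ([N+1] ++ List.replicate (N) 1) = ((([] : List ℕ) ++ [N+1]) ++ List.replicate (N) 1) from rfl]
    simp only [transLam_append_singleton, transLam_append_replicate, transLam_nil,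
      List.length_append, List.length_replicate, List.length_nil, List.length_cons]
    push_cast; ring
  · intro x hx; simp at hx; omega
  · simp [List.length_append, List.length_replicate]; omega


lemma fam2 (u e n m : ℕ) (hn : n = 4*u+2*e+7) (hm : m = u+1) :
    ∃ L : List ℕ, IsPartitionOf n L ∧ transLam L = (m : ℚ) ∧
      (∀ x ∈ L, 2 * x ≤ n + 1) ∧ 2 * L.length ≤ n + 1 := by
  subst hn; subst hm
  refine ⟨(([u+e+3, u+3] ++ List.replicate (u) 2) ++ List.replicate (e+1) 1), ⟨?_, ?_, ?_⟩, ?_, ?_, ?_⟩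
  · refine sorted_ge_append_replicate _ (sorted_ge_append_replicate _ ?_ ?_) ?_
    · simp [List.pairwise_cons]; try omega
    · intro x hx; simp at hx; omega
    · intro x hx; simp at hx; omega
  · intro x hx; simp at hx; omega
  · simp [List.sum_append, List.sum_replicate]; omega
  · rw [show (([u+e+3, u+3] ++ List.replicate (u) 2) ++ List.replicate (e+1) 1) = ((((([] : List ℕ) ++ [u+e+3]) ++ [u+3]) ++ List.replicate (u) 2) ++ List.replicate (e+1) 1) from rfl]
    simp only [transLam_append_singleton, transLam_append_replicate, transLam_nil,
      List.length_append, List.length_replicate, List.length_nil, List.length_cons]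
    push_cast; ring
  · intro x hx; simp at hx; omega
  · simp [List.length_append, List.length_replicate]; omega


lemma fam3 (g f n m : ℕ) (hn : n = 4*g+2*f+5) (hm : m = g+f+2) :
    ∃ L : List ℕ, IsPartitionOf n L ∧ transLam L = (m : ℚ) ∧
      (∀ x ∈ L, 2 * x ≤ n + 1) ∧ 2 * L.length ≤ n + 1 := by
  subst hn; subst hm
  refine ⟨(([g+f+3, g+2] ++ List.replicate (g) 2) ++ List.replicate (f) 1), ⟨?_, ?_, ?_⟩, ?_, ?_, ?_⟩
  · refine sorted_ge_append_replicate _ (sorted_ge_append_replicate _ ?_ ?_) ?_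
    · simp [List.pairwise_cons]; try omega
    · intro x hx; simp at hx; omega
    · intro x hx; simp at hx; omega
  · intro x hx; simp at hx; omega
  · simp [List.sum_append, List.sum_replicate]; omega
  · rw [show (([g+f+3, g+2] ++ List.replicate (g) 2) ++ List.replicate (f) 1) = ((((([] : List ℕ) ++ [g+f+3]) ++ [g+2]) ++ List.replicate (g) 2) ++ List.replicate (f) 1) from rfl]
    simp only [transLam_append_singleton, transLam_append_replicate, transLam_nil,
      List.length_append, List.length_replicate, List.length_nil, List.length_cons]
    push_cast; ring
  · intro x hx; simp at hx; omega
  · simp [List.length_append, List.length_replicate]; omega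


lemma fam4 (c n m : ℕ) (hn : n = 4*c+21) (hm : m = c+5) :
    ∃ L : List ℕ, IsPartitionOf n L ∧ transLam L = (m : ℚ) ∧
      (∀ x ∈ L, 2 * x ≤ n + 1) ∧ 2 * L.length ≤ n + 1 := by
  subst hn; subst hm
  refine ⟨(([c+6, c+5, 5, 3] ++ List.replicate (c) 2) ++ List.replicate (2) 1), ⟨?_, ?_, ?_⟩, ?_, ?_, ?_⟩
  · refine sorted_ge_append_replicate _ (sorted_ge_append_replicate _ ?_ ?_) ?_
    · simp [List.pairwise_cons]; try omega
    · intro x hx; simp at hx; omega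
    · intro x hx; simp at hx; omega
  · intro x hx; simp at hx; omega
  · simp [List.sum_append, List.sum_replicate]; omega
  · rw [show (([c+6, c+5, 5, 3] ++ List.replicate (c) 2) ++ List.replicate (2) 1) = ((((((([] : List ℕ) ++ [c+6]) ++ [c+5]) ++ [5]) ++ [3]) ++ List.replicate (c) 2) ++ List.replicate (2) 1) from rfl]
    simp only [transLam_append_singleton, transLam_append_replicate, transLam_nil,
      List.length_append, List.length_replicate, List.length_nil, List.length_cons]
    push_cast; ring
  · intro x hx; simp at hx; omega
  · simp [List.length_append, List.length_replicate]; omega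


lemma fam5 (c n m : ℕ) (hn : n = 4*c+19) (hm : m = c+5) :
    ∃ L : List ℕ, IsPartitionOf n L ∧ transLam L = (m : ℚ) ∧
      (∀ x ∈ L, 2 * x ≤ n + 1) ∧ 2 * L.length ≤ n + 1 := by
  subst hn; subst hm
  refine ⟨(([c+7, c+4, 3, 3] ++ List.replicate (c) 2) ++ List.replicate (2) 1), ⟨?_, ?_, ?_⟩, ?_, ?_, ?_⟩
  · refine sorted_ge_append_replicate _ (sorted_ge_append_replicate _ ?_ ?_) ?_
    · simp [List.pairwise_cons]; try omega
    · intro x hx; simp at hx; omega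
    · intro x hx; simp at hx; omega
  · intro x hx; simp at hx; omega
  · simp [List.sum_append, List.sum_replicate]; omega
  · rw [show (([c+7, c+4, 3, 3] ++ List.replicate (c) 2) ++ List.replicate (2) 1) = ((((((([] : List ℕ) ++ [c+7]) ++ [c+4]) ++ [3]) ++ [3]) ++ List.replicate (c) 2) ++ List.replicate (2) 1) from rfl]
    simp only [transLam_append_singleton, transLam_append_replicate, transLam_nil,
      List.length_append, List.length_replicate, List.length_nil, List.length_cons]
    push_cast; ring
  · intro x hx; simp at hx; omega
  · simp [List.length_append, List.length_replicate]; omega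


lemma fam6 (e n m : ℕ) (hn : n = 2*e+8) (hm : m = 0) :
    ∃ L : List ℕ, IsPartitionOf n L ∧ transLam L = (m : ℚ) ∧
      (∀ x ∈ L, 2 * x ≤ n + 1) ∧ 2 * L.length ≤ n + 1 := by
  subst hn; subst hm
  refine ⟨([e+3, 3, 2] ++ List.replicate (e) 1), ⟨?_, ?_, ?_⟩, ?_, ?_, ?_⟩
  · refine sorted_ge_append_replicate _ ?_ ?_
    · simp [List.pairwise_cons]; try omega
    · intro x hx; simp at hx; omega
  · intro x hx; simp at hx; omega
  · simp [List.sum_append, List.sum_replicate]; omega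
  · rw [show ([e+3, 3, 2] ++ List.replicate (e) 1) = ((((([] : List ℕ) ++ [e+3]) ++ [3]) ++ [2]) ++ List.replicate (e) 1) from rfl]
    simp only [transLam_append_singleton, transLam_append_replicate, transLam_nil,
      List.length_append, List.length_replicate, List.length_nil, List.length_cons]
    push_cast; ring
  · intro x hx; simp at hx; omega
  · simp [List.length_append, List.length_replicate]; omega


lemma fam7 (e n m : ℕ) (hn : n = 2*e+14) (hm : m = 1) :
    ∃ L : List ℕ, IsPartitionOf n L ∧ transLam L = (m : ℚ) ∧
      (∀ x ∈ L, 2 * x ≤ n + 1) ∧ 2 * L.length ≤ n + 1 := by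
  subst hn; subst hm
  refine ⟨([e+4, 4, 4, 2] ++ List.replicate (e) 1), ⟨?_, ?_, ?_⟩, ?_, ?_, ?_⟩
  · refine sorted_ge_append_replicate _ ?_ ?_
    · simp [List.pairwise_cons]; try omega
    · intro x hx; simp at hx; omega
  · intro x hx; simp at hx; omega
  · simp [List.sum_append, List.sum_replicate]; omega
  · rw [show ([e+4, 4, 4, 2] ++ List.replicate (e) 1) = (((((([] : List ℕ) ++ [e+4]) ++ [4]) ++ [4]) ++ [2]) ++ List.replicate (e) 1) from rfl]
    simp only [transLam_append_singleton, transLam_append_replicate, transLam_nil,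
      List.length_append, List.length_replicate, List.length_nil, List.length_cons]
    push_cast; ring
  · intro x hx; simp at hx; omega
  · simp [List.length_append, List.length_replicate]; omega


lemma fam8 (u e n m : ℕ) (hn : n = 4*u+2*e+12) (hm : m = u+2) :
    ∃ L : List ℕ, IsPartitionOf n L ∧ transLam L = (m : ℚ) ∧
      (∀ x ∈ L, 2 * x ≤ n + 1) ∧ 2 * L.length ≤ n + 1 := by
  subst hn; subst hm
  refine ⟨(([u+e+4, u+4, 3] ++ List.replicate (u) 2) ++ List.replicate (e+1) 1), ⟨?_, ?_, ?_⟩, ?_, ?_, ?_⟩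
  · refine sorted_ge_append_replicate _ (sorted_ge_append_replicate _ ?_ ?_) ?_
    · simp [List.pairwise_cons]; try omega
    · intro x hx; simp at hx; omega
    · intro x hx; simp at hx; omega
  · intro x hx; simp at hx; omega
  · simp [List.sum_append, List.sum_replicate]; omega
  · rw [show (([u+e+4, u+4, 3] ++ List.replicate (u) 2) ++ List.replicate (e+1) 1) = (((((([] : List ℕ) ++ [u+e+4]) ++ [u+4]) ++ [3]) ++ List.replicate (u) 2) ++ List.replicate (e+1) 1) from rfl]
    simp only [transLam_append_singleton, transLam_append_replicate, transLam_nil,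
      List.length_append, List.length_replicate, List.length_nil, List.length_cons]
    push_cast; ring
  · intro x hx; simp at hx; omega
  · simp [List.length_append, List.length_replicate]; omega


lemma fam9 (g f n m : ℕ) (hn : n = 4*g+2*f+10) (hm : m = g+f+3) :
    ∃ L : List ℕ, IsPartitionOf n L ∧ transLam L = (m : ℚ) ∧
      (∀ x ∈ L, 2 * x ≤ n + 1) ∧ 2 * L.length ≤ n + 1 := by
  subst hn; subst hm
  refine ⟨(([g+f+4, g+3, 3] ++ List.replicate (g) 2) ++ List.replicate (f) 1), ⟨?_, ?_, ?_⟩, ?_, ?_, ?_⟩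
  · refine sorted_ge_append_replicate _ (sorted_ge_append_replicate _ ?_ ?_) ?_
    · simp [List.pairwise_cons]; try omega
    · intro x hx; simp at hx; omega
    · intro x hx; simp at hx; omega
  · intro x hx; simp at hx; omega
  · simp [List.sum_append, List.sum_replicate]; omega
  · rw [show (([g+f+4, g+3, 3] ++ List.replicate (g) 2) ++ List.replicate (f) 1) = (((((([] : List ℕ) ++ [g+f+4]) ++ [g+3]) ++ [3]) ++ List.replicate (g) 2) ++ List.replicate (f) 1) from rfl]
    simp only [transLam_append_singleton, transLam_append_replicate, transLam_nil,
      List.length_append, List.length_replicate, List.length_nil, List.length_cons]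
    push_cast; ring
  · intro x hx; simp at hx; omega
  · simp [List.length_append, List.length_replicate]; omega


lemma fam10 (c n m : ℕ) (hn : n = 4*c+24) (hm : m = c+6) :
    ∃ L : List ℕ, IsPartitionOf n L ∧ transLam L = (m : ℚ) ∧
      (∀ x ∈ L, 2 * x ≤ n + 1) ∧ 2 * L.length ≤ n + 1 := by
  subst hn; subst hm
  refine ⟨([c+6, c+5, 5, 5, 3] ++ List.replicate (c) 2), ⟨?_, ?_, ?_⟩, ?_, ?_, ?_⟩
  · refine sorted_ge_append_replicate _ ?_ ?_
    · simp [List.pairwise_cons]; try omega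
    · intro x hx; simp at hx; omega
  · intro x hx; simp at hx; omega
  · simp [List.sum_append, List.sum_replicate]; omega
  · rw [show ([c+6, c+5, 5, 5, 3] ++ List.replicate (c) 2) = ((((((([] : List ℕ) ++ [c+6]) ++ [c+5]) ++ [5]) ++ [5]) ++ [3]) ++ List.replicate (c) 2) from rfl]
    simp only [transLam_append_singleton, transLam_append_replicate, transLam_nil,
      List.length_append, List.length_replicate, List.length_nil, List.length_cons]
    push_cast; ring
  · intro x hx; simp at hx; omega
  · simp [List.length_append, List.length_replicate]; omega


lemma fam11 (c n m : ℕ) (hn : n = 4*c+30) (hm : m = c+7) :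
    ∃ L : List ℕ, IsPartitionOf n L ∧ transLam L = (m : ℚ) ∧
      (∀ x ∈ L, 2 * x ≤ n + 1) ∧ 2 * L.length ≤ n + 1 := by
  subst hn; subst hm
  refine ⟨([c+7, c+6, 6, 5, 3, 3] ++ List.replicate (c) 2), ⟨?_, ?_, ?_⟩, ?_, ?_, ?_⟩
  · refine sorted_ge_append_replicate _ ?_ ?_
    · simp [List.pairwise_cons]; try omega
    · intro x hx; simp at hx; omega
  · intro x hx; simp at hx; omega
  · simp [List.sum_append, List.sum_replicate]; omega
  · rw [show ([c+7, c+6, 6, 5, 3, 3] ++ List.replicate (c) 2) = (((((((([] : List ℕ) ++ [c+7]) ++ [c+6]) ++ [6]) ++ [5]) ++ [3]) ++ [3]) ++ List.replicate (c) 2) from rfl]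
    simp only [transLam_append_singleton, transLam_append_replicate, transLam_nil,
      List.length_append, List.length_replicate, List.length_nil, List.length_cons]
    push_cast; ring
  · intro x hx; simp at hx; omega
  · simp [List.length_append, List.length_replicate]; omega
lemma hardCase (v : List ℕ) (n m : ℕ) (hn : n = v.sum) (hm : transLam v = (m : ℚ))
    (h1 : v.Pairwise (· ≥ ·)) (h2 : ∀ x ∈ v, 0 < x)
    (h3 : ∀ x ∈ v, 2 * x ≤ v.sum + 1) (h4 : 2 * v.length ≤ v.sum + 1) :
    ∃ L : List ℕ, IsPartitionOf n L ∧ transLam L = (m : ℚ) ∧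
      (∀ x ∈ L, 2 * x ≤ n + 1) ∧ 2 * L.length ≤ n + 1 := by
  subst hn
  exact ⟨v, ⟨h1, h2, rfl⟩, hm, h3, h4⟩

lemma lam20 : transLam [9,2,2,2,2,2,1] = ((5:ℕ) : ℚ) := by
  norm_num [transLam, Finset.sum_range_succ, List.getD]

lemma lam22 : transLam [9,5,2,1,1,1,1,1,1] = ((5:ℕ) : ℚ) := by
  norm_num [transLam, Finset.sum_range_succ, List.getD]

lemma lam26 : transLam [10,5,4,1,1,1,1,1,1,1] = ((6:ℕ) : ℚ) := by
  norm_num [transLam, Finset.sum_range_succ, List.getD]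


theorem segment_S1_with_bounds (n : ℕ) (hn : 19 ≤ n) (m : ℕ)
    (hodd : Odd n → 2 * m ≤ n - 1) (heven : Even n → 2 * m ≤ n - 4) :
    ∃ L : List ℕ, IsPartitionOf n L ∧ transLam L = (m : ℚ) ∧
      (∀ x ∈ L, 2 * x ≤ n + 1) ∧ 2 * L.length ≤ n + 1 := by
  rcases Nat.even_or_odd n with he | ho
  · obtain ⟨N, hN⟩ := he
    have hm : 2 * m ≤ n - 4 := heven ⟨N, hN⟩
    by_cases h0 : m = 0
    · exact fam6 (N-4) n m (by omega) (by omega)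
    by_cases h1 : m = 1
    · exact fam7 (N-7) n m (by omega) (by omega)
    by_cases hout : 2*m + 2 ≤ N
    · exact fam8 (m-2) (N-2*m-2) n m (by omega) (by omega)
    by_cases hin : N ≤ 2*m - 1
    · exact fam9 (N-m-2) (2*m-1-N) n m (by omega) (by omega)
    by_cases hg1 : N = 2*m
    · by_cases hm6 : 6 ≤ m
      · exact fam10 (m-6) n m (by omega) (by omega)
      · have h5 : m = 5 := by omega
        subst h5
        exact hardCase [9,2,2,2,2,2,1] n 5 (by simp; omega) lam20
          (by decide) (by decide) (by decide) (by decide)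
    · by_cases hm7 : 7 ≤ m
      · exact fam11 (m-7) n m (by omega) (by omega)
      · have h56 : m = 5 ∧ n = 22 ∨ m = 6 ∧ n = 26 := by omega
        rcases h56 with ⟨h5, h6⟩ | ⟨h5, h6⟩ <;> subst h5
        · exact hardCase [9,5,2,1,1,1,1,1,1] n 5 (by simp; omega) lam22
            (by decide) (by decide) (by decide) (by decide)
        · exact hardCase [10,5,4,1,1,1,1,1,1,1] n 6 (by simp; omega) lam26
            (by decide) (by decide) (by decide) (by decide)
  · obtain ⟨N, hN⟩ := ho
    have hm : 2 * m ≤ n - 1 := hodd ⟨N, hN⟩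
    by_cases h0 : m = 0
    · exact fam1 N n m (by omega) (by omega)
    by_cases hout : 2*m + 1 ≤ N
    · exact fam2 (m-1) (N-2*m-1) n m (by omega) (by omega)
    by_cases hin : N ≤ 2*m - 2
    · exact fam3 (N-m) (2*m-2-N) n m (by omega) (by omega)
    by_cases hg1 : N = 2*m
    · exact fam4 (m-5) n m (by omega) (by omega)
    · exact fam5 (m-5) n m (by omega) (by omega)
end

section
/- For every integer n ≥ 31: if n is odd, then for each m ∈ {(n+1)/2, (n+3)/2, (n+5)/2}, and if n is even, then for each m ∈ {(n−2)/2, n/2, (n+2)/2}, there exists a partition p of n with λ(p) = m, largest part of p at most (n + 2)/2, and number of parts of p at most (n + 2)/2. -/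
lemma sum_getD (L : List ℕ) :
    ∑ j ∈ Finset.range L.length, (L.getD j 0 : ℚ) = (L.sum : ℚ) := by
  induction L with
  | nil => simp
  | cons x T ih =>
    rw [List.length_cons, Finset.sum_range_succ']
    simp only [List.getD_cons_succ, List.getD_cons_zero, List.sum_cons]
    rw [ih]; push_cast; ring

lemma transLam_cons (x : ℕ) (T : List ℕ) :
    transLam (x :: T) = (x:ℚ) * ((x:ℚ) - 1) / 2 + transLam T - (T.sum : ℚ) := by
  unfold transLam
  rw [List.length_cons, Finset.sum_range_succ']
  push_cast
  simp only [List.getD_cons_succ, List.getD_cons_zero]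
  have h : ∀ j ∈ Finset.range T.length,
      (T.getD j 0 : ℚ) * ((T.getD j 0 : ℚ) - 2 * (((j:ℚ) + 1) + 1) + 1)
      = ((T.getD j 0 : ℚ) * ((T.getD j 0 : ℚ) - 2 * ((j:ℚ) + 1) + 1)
          - 2 * (T.getD j 0 : ℚ)) := by
    intro j _; ring
  rw [Finset.sum_congr rfl h, Finset.sum_sub_distrib, ← Finset.mul_sum, sum_getD,
    ← Nat.cast_list_sum]
  ring

lemma transLam_replicate_one (c : ℕ) :
    transLam (List.replicate c 1) = -((c:ℚ) * ((c:ℚ) - 1)) / 2 := by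
  induction c with
  | zero => simp [transLam]
  | succ c ih =>
    rw [List.replicate_succ, transLam_cons, ih]
    simp [List.sum_replicate]
    ring

lemma sorted_rep1 (c : ℕ) : (List.replicate c 1).Pairwise (· ≥ ·) := by
  induction c with
  | zero => simp
  | succ c ih =>
    rw [List.replicate_succ]
    refine List.pairwise_cons.mpr ⟨fun b hb => ?_, ih⟩
    simp [List.mem_replicate] at hb; omega

theorem set_A1_with_bounds (n : ℕ) (hn : 31 ≤ n) (m : ℕ)
    (h : (Odd n ∧ (2 * m = n + 1 ∨ 2 * m = n + 3 ∨ 2 * m = n + 5)) ∨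
         (Even n ∧ (2 * m = n - 2 ∨ 2 * m = n ∨ 2 * m = n + 2))) :
    ∃ L : List ℕ, IsPartitionOf n L ∧ transLam L = (m : ℚ) ∧
      (∀ x ∈ L, 2 * x ≤ n + 2) ∧ 2 * L.length ≤ n + 2 := by
  unfold IsPartitionOf
  rcases h with ⟨hpar, h1 | h1 | h1⟩ | ⟨hpar, h1 | h1 | h1⟩
  · obtain ⟨c, hc, hm⟩ : ∃ c, n = 2*c + 23 ∧ m = c + 12 := ⟨m - 12, by omega⟩
    refine ⟨(c+6) :: 7 :: 4 :: 3 :: 3 :: List.replicate c 1, ⟨?_, ?_, ?_⟩, ?_, ?_, ?_⟩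
    · simp only [List.pairwise_cons, List.mem_cons, List.mem_replicate]
      exact ⟨fun b hb => by omega, fun b hb => by omega, fun b hb => by omega, fun b hb => by omega, fun b hb => by omega, sorted_rep1 c⟩
    · intro x hx
      simp only [List.mem_cons, List.mem_replicate] at hx
      omega
    · simp only [List.sum_cons, List.sum_replicate, smul_eq_mul, mul_one]
      omega
    · rw [transLam_cons, transLam_cons, transLam_cons, transLam_cons, transLam_cons, transLam_replicate_one]
      simp only [List.sum_cons, List.sum_replicate, smul_eq_mul, mul_one]
      subst hm
      push_cast
      ring
    · intro x hx
      simp only [List.mem_cons, List.mem_replicate] at hx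
      omega
    · simp only [List.length_cons, List.length_replicate]
      omega
  · obtain ⟨c, hc, hm⟩ : ∃ c, n = 2*c + 7 ∧ m = c + 5 := ⟨m - 5, by omega⟩
    refine ⟨(c+3) :: 4 :: List.replicate c 1, ⟨?_, ?_, ?_⟩, ?_, ?_, ?_⟩
    · simp only [List.pairwise_cons, List.mem_cons, List.mem_replicate]
      exact ⟨fun b hb => by omega, fun b hb => by omega, sorted_rep1 c⟩
    · intro x hx
      simp only [List.mem_cons, List.mem_replicate] at hx
      omega
    · simp only [List.sum_cons, List.sum_replicate, smul_eq_mul, mul_one]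
      omega
    · rw [transLam_cons, transLam_cons, transLam_replicate_one]
      simp only [List.sum_cons, List.sum_replicate, smul_eq_mul, mul_one]
      subst hm
      push_cast
      ring
    · intro x hx
      simp only [List.mem_cons, List.mem_replicate] at hx
      omega
    · simp only [List.length_cons, List.length_replicate]
      omega
  · obtain ⟨c, hc, hm⟩ : ∃ c, n = 2*c + 11 ∧ m = c + 8 := ⟨m - 8, by omega⟩
    refine ⟨(c+4) :: 5 :: 2 :: List.replicate c 1, ⟨?_, ?_, ?_⟩, ?_, ?_, ?_⟩
    · simp only [List.pairwise_cons, List.mem_cons, List.mem_replicate]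
      exact ⟨fun b hb => by omega, fun b hb => by omega, fun b hb => by omega, sorted_rep1 c⟩
    · intro x hx
      simp only [List.mem_cons, List.mem_replicate] at hx
      omega
    · simp only [List.sum_cons, List.sum_replicate, smul_eq_mul, mul_one]
      omega
    · rw [transLam_cons, transLam_cons, transLam_cons, transLam_replicate_one]
      simp only [List.sum_cons, List.sum_replicate, smul_eq_mul, mul_one]
      subst hm
      push_cast
      ring
    · intro x hx
      simp only [List.mem_cons, List.mem_replicate] at hx
      omega
    · simp only [List.length_cons, List.length_replicate]
      omega
  · obtain ⟨c, hc, hm⟩ : ∃ c, n = 2*c + 30 ∧ m = c + 14 := ⟨m - 14, by omega⟩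
    refine ⟨(c+7) :: 8 :: 5 :: 4 :: 3 :: 3 :: List.replicate c 1, ⟨?_, ?_, ?_⟩, ?_, ?_, ?_⟩
    · simp only [List.pairwise_cons, List.mem_cons, List.mem_replicate]
      exact ⟨fun b hb => by omega, fun b hb => by omega, fun b hb => by omega, fun b hb => by omega, fun b hb => by omega, fun b hb => by omega, sorted_rep1 c⟩
    · intro x hx
      simp only [List.mem_cons, List.mem_replicate] at hx
      omega
    · simp only [List.sum_cons, List.sum_replicate, smul_eq_mul, mul_one]
      omega
    · rw [transLam_cons, transLam_cons, transLam_cons, transLam_cons, transLam_cons, transLam_cons, transLam_replicate_one]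
      simp only [List.sum_cons, List.sum_replicate, smul_eq_mul, mul_one]
      subst hm
      push_cast
      ring
    · intro x hx
      simp only [List.mem_cons, List.mem_replicate] at hx
      omega
    · simp only [List.length_cons, List.length_replicate]
      omega
  · obtain ⟨c, hc, hm⟩ : ∃ c, n = 2*c + 2 ∧ m = c + 1 := ⟨m - 1, by omega⟩
    refine ⟨(c+2) :: List.replicate c 1, ⟨?_, ?_, ?_⟩, ?_, ?_, ?_⟩
    · simp only [List.pairwise_cons, List.mem_cons, List.mem_replicate]
      exact ⟨fun b hb => by omega, sorted_rep1 c⟩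
    · intro x hx
      simp only [List.mem_cons, List.mem_replicate] at hx
      omega
    · simp only [List.sum_cons, List.sum_replicate, smul_eq_mul, mul_one]
      omega
    · rw [transLam_cons, transLam_replicate_one]
      simp only [List.sum_cons, List.sum_replicate, smul_eq_mul, mul_one]
      subst hm
      push_cast
      ring
    · intro x hx
      simp only [List.mem_cons, List.mem_replicate] at hx
      omega
    · simp only [List.length_cons, List.length_replicate]
      omega
  · obtain ⟨c, hc, hm⟩ : ∃ c, n = 2*c + 26 ∧ m = c + 14 := ⟨m - 14, by omega⟩
    refine ⟨(c+7) :: 8 :: 3 :: 3 :: 3 :: 2 :: List.replicate c 1, ⟨?_, ?_, ?_⟩, ?_, ?_, ?_⟩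
    · simp only [List.pairwise_cons, List.mem_cons, List.mem_replicate]
      exact ⟨fun b hb => by omega, fun b hb => by omega, fun b hb => by omega, fun b hb => by omega, fun b hb => by omega, fun b hb => by omega, sorted_rep1 c⟩
    · intro x hx
      simp only [List.mem_cons, List.mem_replicate] at hx
      omega
    · simp only [List.sum_cons, List.sum_replicate, smul_eq_mul, mul_one]
      omega
    · rw [transLam_cons, transLam_cons, transLam_cons, transLam_cons, transLam_cons, transLam_cons, transLam_replicate_one]
      simp only [List.sum_cons, List.sum_replicate, smul_eq_mul, mul_one]
      subst hm
      push_cast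
      ring
    · intro x hx
      simp only [List.mem_cons, List.mem_replicate] at hx
      omega
    · simp only [List.length_cons, List.length_replicate]
      omega
end

section
/- Let n ≥ 11 be odd and let m be an odd integer with (n+3)/2 ≤ m ≤ n−4. Then the sequence consisting of (m+3)/2, then (n+2−m)/2, then 3, then the number 2 repeated (n−4−m)/2 times, then the number 1 repeated m − (n+3)/2 times, is a partition of n and its value λ equals m. -/
noncomputable def S (L : List ℕ) : ℚ :=
  ∑ j ∈ Finset.range L.length,
    (L.getD j 0 : ℚ) * ((L.getD j 0 : ℚ) - 2 * ((j : ℚ) + 1) + 1)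

lemma transLam_eq (L : List ℕ) : transLam L = S L / 2 := rfl

lemma S_snoc (L : List ℕ) (c : ℕ) :
    S (L ++ [c]) = S L + (c : ℚ) * ((c : ℚ) - 2 * ((L.length : ℚ) + 1) + 1) := by
  unfold S
  rw [List.length_append, List.length_singleton, Finset.sum_range_succ]
  congr 1
  · apply Finset.sum_congr rfl
    intro j hj
    rw [Finset.mem_range] at hj
    rw [List.getD_append _ _ _ _ hj]
  · have h : (L ++ [c]).getD L.length 0 = c := by simp [List.getD]
    rw [h]

lemma S_append_replicate (L : List ℕ) (c k : ℕ) :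
    S (L ++ List.replicate k c) = S L +
      ∑ i ∈ Finset.range k, (c : ℚ) * ((c : ℚ) - 2 * ((L.length : ℚ) + (i : ℚ) + 1) + 1) := by
  induction k with
  | zero => simp
  | succ k ih =>
    rw [List.replicate_succ', ← List.append_assoc, S_snoc, ih, Finset.sum_range_succ]
    have : ((L ++ List.replicate k c).length : ℚ) = (L.length : ℚ) + (k : ℚ) := by
      simp
    rw [this]; ring

lemma sum_lin (k : ℕ) (c L : ℚ) :
    ∑ i ∈ Finset.range k, c * (c - 2 * (L + (i : ℚ) + 1) + 1) =
      (k : ℚ) * (c * (c - 2 * L - 1)) - c * ((k : ℚ) * ((k : ℚ) - 1)) := by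
  induction k with
  | zero => simp
  | succ k ih =>
    rw [Finset.sum_range_succ, ih]
    push_cast
    ring

theorem case_odd_n_odd_lambda (n m : ℕ) (hn : 11 ≤ n) (hnodd : Odd n) (hmodd : Odd m)
    (h1 : n + 3 ≤ 2 * m) (h2 : m ≤ n - 4) :
    IsPartitionOf n
      ([(m + 3) / 2, (n + 2 - m) / 2, 3] ++ List.replicate ((n - 4 - m) / 2) 2
        ++ List.replicate (m - (n + 3) / 2) 1) ∧
    transLam
      ([(m + 3) / 2, (n + 2 - m) / 2, 3] ++ List.replicate ((n - 4 - m) / 2) 2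
        ++ List.replicate (m - (n + 3) / 2) 1) = (m : ℚ) := by
  obtain ⟨a, ha⟩ := hnodd
  obtain ⟨b, hb⟩ := hmodd
  have hex : ∃ r s, n = 4*r + 2*s + 11 ∧ m = 2*r + 2*s + 7 :=
    ⟨(n - 4 - m)/2, m - (n+3)/2, by omega, by omega⟩
  obtain ⟨r, s, hn', hm'⟩ := hex
  have e1 : (m+3)/2 = r + s + 5 := by omega
  have e2 : (n+2-m)/2 = r + 3 := by omega
  have e3 : (n-4-m)/2 = r := by omega
  have e4 : m - (n+3)/2 = s := by omega
  rw [e1, e2, e3, e4]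
  refine ⟨⟨?_, ?_, ?_⟩, ?_⟩
  · simp [List.pairwise_append, List.mem_replicate]
    refine ⟨⟨by omega, ?_⟩, ?_, ?_⟩ <;> rintro x (⟨-, rfl⟩ | ⟨-, rfl⟩) <;> omega
  · intro x hx
    simp only [List.mem_append, List.mem_cons, List.mem_replicate, List.mem_singleton,
      List.not_mem_nil, or_false] at hx
    omega
  · simp only [List.sum_append, List.sum_replicate, List.sum_cons, List.sum_nil, smul_eq_mul]
    omega
  · rw [transLam_eq, S_append_replicate, S_append_replicate, sum_lin, sum_lin]
    have hbase : S [r+s+5, r+3, 3] =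
        ((r:ℚ)+(s:ℚ)+5)*(((r:ℚ)+(s:ℚ)+5) - 1) + ((r:ℚ)+3)*(((r:ℚ)+3)-3) + 3*(3-5) := by
      unfold S
      simp [Finset.sum_range_succ]
      push_cast
      ring
    rw [hbase, hm']
    simp only [List.length_append, List.length_replicate, List.length_cons, List.length_nil]
    push_cast
    ring
end

section
/- Let n ≥ 6 be even and let m be an odd integer with (n+4)/2 ≤ m ≤ n−1. Then the sequence consisting of (m+3)/2, then (n+3−m)/2, then the number 2 repeated (n−1−m)/2 times, then the number 1 repeated m − (n+4)/2 times, is a partition of n and its value λ equals m. -/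
lemma sum_split (f : ℕ → ℚ) (a b : ℕ) :
    ∑ i ∈ Finset.range (a + b), f i
      = (∑ i ∈ Finset.range a, f i) + ∑ i ∈ Finset.range b, f (a + i) := by
  induction b with
  | zero => simp
  | succ b ih =>
      rw [← Nat.add_assoc, Finset.sum_range_succ, Finset.sum_range_succ, ih]
      ring

lemma sum_id_q (n : ℕ) : ∑ i ∈ Finset.range n, (i : ℚ) = n * (n - 1) / 2 := by
  induction n with
  | zero => simp
  | succ n ih => rw [Finset.sum_range_succ, ih]; push_cast; ring

lemma lin_sum (n : ℕ) (p q : ℚ) :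
    ∑ i ∈ Finset.range n, (p + q * (i : ℚ)) = n * p + q * (n * (n - 1) / 2) := by
  rw [Finset.sum_add_distrib, ← Finset.mul_sum, sum_id_q, Finset.sum_const, Finset.card_range]
  simp [nsmul_eq_mul]

lemma getD_rep (x r j : ℕ) (h : j < r) : (List.replicate r x).getD j 0 = x := by
  rw [List.getD_eq_getElem _ _ (by simpa using h)]
  simp

lemma part_key (c d : ℕ) :
    IsPartitionOf (4*c+2*d+6)
      ((c+d+4) :: (c+2) :: (List.replicate c 2 ++ List.replicate d 1)) := by
  refine ⟨?_, ?_, ?_⟩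
  · simp only [List.pairwise_cons, List.pairwise_append, List.mem_cons,
      List.mem_append, List.mem_replicate, List.pairwise_replicate, ge_iff_le]
    refine ⟨?_, ?_, ?_, ?_, ?_⟩
    · rintro b (rfl | ⟨-, rfl⟩ | ⟨-, rfl⟩) <;> omega
    · rintro b (⟨-, rfl⟩ | ⟨-, rfl⟩) <;> omega
    · omega
    · omega
    · rintro x ⟨-, rfl⟩ y ⟨-, rfl⟩; omega
  · intro x hx
    simp only [List.mem_cons, List.mem_append, List.mem_replicate] at hx
    rcases hx with rfl | rfl | ⟨-, rfl⟩ | ⟨-, rfl⟩ <;> omega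
  · simp [List.sum_replicate]; omega

lemma lam_key (c d : ℕ) :
    transLam ((c+d+4) :: (c+2) :: (List.replicate c 2 ++ List.replicate d 1))
      = (2*c+2*d+5 : ℚ) := by
  have hlen : ((c+d+4) :: (c+2) :: (List.replicate c 2 ++ List.replicate d 1)).length
      = (c+d)+1+1 := by simp
  rw [transLam, hlen, Finset.sum_range_succ', Finset.sum_range_succ']
  simp only [List.getD_cons_succ, List.getD_cons_zero]
  rw [sum_split]
  have e2 : ∀ i ∈ Finset.range c,
      (((List.replicate c 2 ++ List.replicate d 1).getD i 0 : ℕ) : ℚ)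
        * ((((List.replicate c 2 ++ List.replicate d 1).getD i 0 : ℕ) : ℚ)
          - 2 * (((i+1+1 : ℕ) : ℚ) + 1) + 1) = (-6) + (-4) * (i : ℚ) := by
    intro i hi
    rw [List.getD_append _ _ _ _ (by simpa using Finset.mem_range.mp hi),
      getD_rep _ _ _ (Finset.mem_range.mp hi)]
    push_cast; ring
  have e1 : ∀ i ∈ Finset.range d,
      (((List.replicate c 2 ++ List.replicate d 1).getD (c+i) 0 : ℕ) : ℚ)
        * ((((List.replicate c 2 ++ List.replicate d 1).getD (c+i) 0 : ℕ) : ℚ)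
          - 2 * (((c+i+1+1 : ℕ) : ℚ) + 1) + 1)
        = (-2*(c:ℚ) - 4) + (-2) * (i : ℚ) := by
    intro i hi
    rw [List.getD_append_right _ _ _ _ (by simp),
      show c + i - (List.replicate c 2).length = i by simp,
      getD_rep _ _ _ (Finset.mem_range.mp hi)]
    push_cast; ring
  rw [Finset.sum_congr rfl e2, Finset.sum_congr rfl e1, lin_sum, lin_sum]
  push_cast
  ring

theorem case_even_n_odd_lambda (n m : ℕ) (hn : 6 ≤ n) (hneven : Even n) (hmodd : Odd m)
    (h1 : n + 4 ≤ 2 * m) (h2 : m ≤ n - 1) :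
    IsPartitionOf n
      ([(m + 3) / 2, (n + 3 - m) / 2] ++ List.replicate ((n - 1 - m) / 2) 2
        ++ List.replicate (m - (n + 4) / 2) 1) ∧
    transLam
      ([(m + 3) / 2, (n + 3 - m) / 2] ++ List.replicate ((n - 1 - m) / 2) 2
        ++ List.replicate (m - (n + 4) / 2) 1) = (m : ℚ) := by
  obtain ⟨a, ha⟩ := hneven
  obtain ⟨b, hb⟩ := hmodd
  obtain ⟨c, d, hn', hm'⟩ : ∃ c d, n = 4*c+2*d+6 ∧ m = 2*c+2*d+5 :=
    ⟨a - 1 - b, 2*b - a - 1, by omega⟩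
  have hl : [(m + 3) / 2, (n + 3 - m) / 2] ++ List.replicate ((n - 1 - m) / 2) 2
        ++ List.replicate (m - (n + 4) / 2) 1
      = (c+d+4) :: (c+2) :: (List.replicate c 2 ++ List.replicate d 1) := by
    rw [show (m + 3) / 2 = c+d+4 by omega, show (n + 3 - m) / 2 = c+2 by omega,
      show (n - 1 - m) / 2 = c by omega, show m - (n + 4) / 2 = d by omega]
    simp
  rw [hl, hn', hm']
  refine ⟨part_key c d, ?_⟩
  rw [lam_key]
  push_cast
  ring
end

section
/- Let n ≥ 3 be odd. Then the sequence consisting of (n+3)/2 followed by the number 1 repeated (n−3)/2 times is a partition of n and its value λ equals n. -/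
lemma sorted_replicate_one : ∀ m : ℕ, (List.replicate m 1).Pairwise (· ≥ ·) := by
  intro m
  induction m with
  | zero => simp
  | succ m ih =>
    rw [List.replicate_succ, List.pairwise_cons]
    exact ⟨fun b hb => le_of_eq (List.eq_of_mem_replicate hb), ih⟩

lemma gauss_key : ∀ m : ℕ, ∑ j ∈ Finset.range m,
    ((1:ℚ) * ((1:ℚ) - 2*((j:ℚ)+1+1) + 1)) = -(m:ℚ)*((m:ℚ)+1) := by
  intro m
  induction m with
  | zero => simp
  | succ m ih =>
    rw [Finset.sum_range_succ, ih]
    push_cast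
    ring

theorem lam_hook_eq_n (n : ℕ) (hn : 3 ≤ n) (hodd : Odd n) :
    IsPartitionOf n ((n + 3) / 2 :: List.replicate ((n - 3) / 2) 1) ∧
    transLam ((n + 3) / 2 :: List.replicate ((n - 3) / 2) 1) = (n : ℚ) := by
  obtain ⟨k, rfl⟩ := hodd
  have hk : 1 ≤ k := by omega
  have h1 : (2*k+1 + 3) / 2 = k + 2 := by omega
  have h2 : (2*k+1 - 3) / 2 = k - 1 := by omega
  rw [h1, h2]
  constructor
  · refine ⟨?_, ?_, ?_⟩
    · rw [List.pairwise_cons]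
      constructor
      · intro b hb
        rw [List.eq_of_mem_replicate hb]; omega
      · exact sorted_replicate_one _
    · intro x hx
      rcases List.mem_cons.mp hx with h | h
      · omega
      · rw [List.eq_of_mem_replicate h]; omega
    · simp [List.sum_replicate]; omega
  · unfold transLam
    have hlen : (((k+2) :: List.replicate (k-1) 1).length) = (k-1) + 1 := by simp
    rw [hlen, Finset.sum_range_succ']
    have hget : ∀ j ∈ Finset.range (k-1),
        ((((k+2) :: List.replicate (k-1) 1).getD (j+1) 0 : ℕ) : ℚ)
          * (((((k+2) :: List.replicate (k-1) 1).getD (j+1) 0 : ℕ) : ℚ) - 2 * (((j+1 : ℕ) : ℚ) + 1) + 1)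
        = (1:ℚ) * ((1:ℚ) - 2*((j:ℚ)+1+1) + 1) := by
      intro j hj
      simp only [Finset.mem_range] at hj
      rw [List.getD_cons_succ, List.getD_eq_getElem?_getD, List.getElem?_replicate,
        if_pos hj, Option.getD_some]
      push_cast
      ring
    rw [Finset.sum_congr rfl hget, gauss_key]
    simp only [List.getD_cons_zero]
    have hc : ((k - 1 : ℕ) : ℚ) = (k : ℚ) - 1 := by
      have : (k : ℚ) ≥ 1 := by exact_mod_cast hk
      push_cast [hk]
      ring
    rw [hc]
    push_cast
    ring
end
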